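/- The permanent of the 3 × 3 real matrix with rows (1, 1, 0), (1, 0, 5), (0, 1/3, 1) equals 8/3, and (8/3 / 3!)³ < (5/3) · (5/9) · (1/9); that is, the mixed volumes V(A₁,A₂,A₃) = 4/9, V(A₁,A₁,A₂) = 5/3, V(A₂,A₂,A₃) = 5/9, V(A₃,A₃,A₁) = 1/9 of the boxes A₁ = [0,1]×[0,1]×{0}, A₂ = [0,1]×{0}×[0,5], A₃ = {0}×[0,1/3]×[0,1] satisfy V(A₁,A₂,A₃)³ < V(A₁,A₁,A₂)·V(A₂,A₂,A₃)·V(A₃,A₃,A₁). -/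

import Mathlib

/-- The permanent of the matrix with rows `(1,1,0)`, `(1,0,5)`, `(0,1/3,1)` equals `8/3`,
and `(8/3 / 3!)³ < (5/3) · (5/9) · (1/9)`; i.e. the mixed volumes
`V(A₁,A₂,A₃) = (8/3)/3! = 4/9`, `V(A₁,A₁,A₂) = 5/3`, `V(A₂,A₂,A₃) = 5/9`,
`V(A₃,A₃,A₁) = 1/9` of the corresponding axis-parallel boxes satisfy
`V(A₁,A₂,A₃)³ < V(A₁,A₁,A₂) · V(A₂,A₂,A₃) · V(A₃,A₃,A₁)`. -/
theorem permanent_example_and_gromov_inequality_failure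
    (a : Matrix (Fin 3) (Fin 3) ℝ) (ha : a = !![1, 1, 0; 1, 0, 5; 0, 1/3, 1]) :
    (∑ σ : Equiv.Perm (Fin 3), ∏ j : Fin 3, a (σ j) j) = 8 / 3 ∧
      ((8 / 3 : ℝ) / (Nat.factorial 3 : ℝ)) ^ 3 < (5 / 3) * (5 / 9) * (1 / 9) := by
  subst ha
  refine ⟨?_, by norm_num [Nat.factorial]⟩
  open Equiv in
  have huniv : (Finset.univ : Finset (Equiv.Perm (Fin 3))) =
      {1, swap 0 1, swap 0 2, swap 1 2, swap 0 1 * swap 1 2, swap 0 2 * swap 1 2} := by decide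
  rw [huniv, Finset.sum_insert (by decide), Finset.sum_insert (by decide),
    Finset.sum_insert (by decide), Finset.sum_insert (by decide),
    Finset.sum_insert (by decide), Finset.sum_singleton]
  have h1 : ∀ σ : Equiv.Perm (Fin 3),
      (∏ j : Fin 3, (!![1, 1, 0; 1, 0, 5; 0, 1/3, 1] : Matrix (Fin 3) (Fin 3) ℝ) (σ j) j) =
      !![1, 1, 0; 1, 0, 5; 0, 1/3, 1] (σ 0) 0 * (!![1, 1, 0; 1, 0, 5; 0, 1/3, 1] (σ 1) 1 *
        !![1, 1, 0; 1, 0, 5; 0, 1/3, 1] (σ 2) 2) := fun σ => by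
    rw [Fin.prod_univ_succ, Fin.prod_univ_succ, Fin.prod_univ_one]; rfl
  rw [h1, h1, h1, h1, h1, h1]
  norm_num [Equiv.swap_apply_def, Equiv.Perm.mul_apply, Matrix.cons_val_zero,
    Matrix.cons_val_one, Matrix.head_cons, Fin.ext_iff, Matrix.cons_val_two, Matrix.tail_cons]
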